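/- arXiv:1808.05408 — 2 statements merged into one kernel-verified Lean document; each statement's English description precedes it below -/
import Mathlib

section
/- Suppose f : ℝ^n × ℝ^n → ℝ^n is L-Lipschitz in its first argument (uniformly in the second) and its Jacobian with respect to the second argument has symmetric part with minimum eigenvalue at least J̲ > 0 on a convex input set U. Let z(t) = e(t) − ē(t) where ė = f(e + x_des, u) + w, ē̇ = f(ē + x_des, ū), with ‖w(t)‖ ≤ w̃, u = ū − k z, and gain k = k̲ + (1/J̲)(L + 1/(4ρ)) for constants k̲, ρ > 0. Then for every t, d/dt (½‖z(t)‖²) ≤ −k̲ J̲ ‖z(t)‖² + ρ w̃². -/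
set_option maxHeartbeats 1000000


theorem stmt_9 {n : ℕ}
    (f : EuclideanSpace ℝ (Fin n) → EuclideanSpace ℝ (Fin n) → EuclideanSpace ℝ (Fin n))
    (U : Set (EuclideanSpace ℝ (Fin n))) (hU : Convex ℝ U)
    (L Jlow ρ klow wmax : ℝ) (hL : 0 < L) (hJlow : 0 < Jlow) (hρ : 0 < ρ)
    (hklow : 0 < klow) (hwmax : 0 ≤ wmax)
    -- f is L-Lipschitz in its first argument, uniformly in the second
    (hLip : ∀ x x' u : EuclideanSpace ℝ (Fin n), ‖f x u - f x' u‖ ≤ L * ‖x - x'‖)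
    -- input Jacobian on U, with symmetric part having eigenvalues ≥ Jlow
    (J : EuclideanSpace ℝ (Fin n) → EuclideanSpace ℝ (Fin n) →
      (EuclideanSpace ℝ (Fin n) →L[ℝ] EuclideanSpace ℝ (Fin n)))
    (hJ : ∀ x : EuclideanSpace ℝ (Fin n), ∀ u ∈ U, HasFDerivWithinAt (f x) (J x u) U u)
    (heig : ∀ x : EuclideanSpace ℝ (Fin n), ∀ u ∈ U, ∀ v : EuclideanSpace ℝ (Fin n),
      Jlow * ‖v‖ ^ 2 ≤ (inner ℝ v (J x u v) : ℝ))
    (xdes : EuclideanSpace ℝ (Fin n))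
    (e ebar : ℝ → EuclideanSpace ℝ (Fin n))
    (u ubar w : ℝ → EuclideanSpace ℝ (Fin n))
    (k : ℝ) (hk : k = klow + (1 / Jlow) * (L + 1 / (4 * ρ)))
    (hwb : ∀ t : ℝ, ‖w t‖ ≤ wmax)
    (huU : ∀ t : ℝ, u t ∈ U) (hubarU : ∀ t : ℝ, ubar t ∈ U)
    (hfb : ∀ t : ℝ, u t = ubar t - k • (e t - ebar t))
    (he : ∀ t : ℝ, HasDerivAt e (f (e t + xdes) (u t) + w t) t)
    (hebar : ∀ t : ℝ, HasDerivAt ebar (f (ebar t + xdes) (ubar t)) t) :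
    ∀ t : ℝ, deriv (fun s => (1 / 2 : ℝ) * ‖e s - ebar s‖ ^ 2) t ≤
      -(klow * Jlow) * ‖e t - ebar t‖ ^ 2 + ρ * wmax ^ 2 := by
  intro t
  have hkpos : 0 ≤ k := by rw [hk]; positivity
  set z : EuclideanSpace ℝ (Fin n) := e t - ebar t with hzdef
  set x : EuclideanSpace ℝ (Fin n) := ebar t + xdes with hxdef
  set zd : EuclideanSpace ℝ (Fin n) :=
    f (e t + xdes) (u t) + w t - f (ebar t + xdes) (ubar t) with hzddef
  have hzder : HasDerivAt (fun s => e s - ebar s) zd t := (he t).sub (hebar t)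
  -- compute the derivative of the Lyapunov function
  have hderiv : deriv (fun s => (1 / 2 : ℝ) * ‖e s - ebar s‖ ^ 2) t = (inner ℝ z zd : ℝ) := by
    have hfun : (fun s => (1 / 2 : ℝ) * ‖e s - ebar s‖ ^ 2)
        = fun s => (1 / 2 : ℝ) * (inner ℝ (e s - ebar s) (e s - ebar s) : ℝ) := by
      funext s; rw [real_inner_self_eq_norm_sq]
    rw [hfun]
    have h1 : HasDerivAt (fun s => (inner ℝ (e s - ebar s) (e s - ebar s) : ℝ))
        ((inner ℝ z zd : ℝ) + (inner ℝ zd z : ℝ)) t := hzder.inner ℝ hzder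
    have h2 := (h1.const_mul (1 / 2 : ℝ)).deriv
    rw [h2, real_inner_comm zd z]; ring
  rw [hderiv]
  -- the feedback direction
  have hvz : u t - ubar t = (-k) • z := by
    rw [hfb t]; rw [hzdef]; module
  -- Lipschitz term
  have hA : (inner ℝ z (f (e t + xdes) (u t) - f x (u t)) : ℝ) ≤ L * ‖z‖ ^ 2 := by
    calc (inner ℝ z (f (e t + xdes) (u t) - f x (u t)) : ℝ)
        ≤ ‖z‖ * ‖f (e t + xdes) (u t) - f x (u t)‖ := real_inner_le_norm _ _
      _ ≤ ‖z‖ * (L * ‖(e t + xdes) - x‖) := by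
          exact mul_le_mul_of_nonneg_left (hLip _ _ _) (norm_nonneg _)
      _ = L * ‖z‖ ^ 2 := by
          rw [hxdef]
          have : e t + xdes - (ebar t + xdes) = z := by rw [hzdef]; abel
          rw [this]; ring
  -- disturbance term (Young's inequality)
  have hW : (inner ℝ z (w t) : ℝ) ≤ ‖z‖ ^ 2 / (4 * ρ) + ρ * wmax ^ 2 := by
    have h1 : (inner ℝ z (w t) : ℝ) ≤ ‖z‖ * ‖w t‖ := real_inner_le_norm _ _
    have h2 : ‖z‖ * ‖w t‖ ≤ ‖z‖ * wmax :=
      mul_le_mul_of_nonneg_left (hwb t) (norm_nonneg _)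
    have h3 : ‖z‖ * wmax ≤ (‖z‖ ^ 2 + 4 * ρ ^ 2 * wmax ^ 2) / (4 * ρ) := by
      rw [le_div_iff₀ (by positivity)]
      nlinarith [sq_nonneg (‖z‖ - 2 * ρ * wmax)]
    have h4 : (‖z‖ ^ 2 + 4 * ρ ^ 2 * wmax ^ 2) / (4 * ρ)
        = ‖z‖ ^ 2 / (4 * ρ) + ρ * wmax ^ 2 := by
      field_simp
    linarith
  -- mean value / strong monotonicity term
  have key : (inner ℝ z (f x (u t)) : ℝ) - (inner ℝ z (f x (ubar t)) : ℝ)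
      ≤ -(k * Jlow * ‖z‖ ^ 2) := by
    set v : EuclideanSpace ℝ (Fin n) := u t - ubar t with hvdef
    set c : ℝ := k * Jlow * ‖z‖ ^ 2 with hcdef
    set p : ℝ → EuclideanSpace ℝ (Fin n) := fun s => ubar t + s • v with hpdef
    have hpmem : ∀ s ∈ Set.Icc (0 : ℝ) 1, p s ∈ U := by
      intro s hs
      have hmem := hU (hubarU t) (huU t) (by linarith [hs.2] : (0:ℝ) ≤ 1 - s) hs.1
        (by ring)
      have hps : p s = (1 - s) • ubar t + s • u t := by
        rw [hpdef]; simp only [hvdef]; module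
      rw [hps]; exact hmem
    set g : ℝ → ℝ := fun s => (inner ℝ z (f x (p s)) : ℝ) + c * s with hgdef
    have hgd : ∀ s ∈ Set.Icc (0 : ℝ) 1, HasDerivWithinAt g
        ((inner ℝ z ((J x (p s)) v) : ℝ) + c) (Set.Icc (0:ℝ) 1) s := by
      intro s hs
      have hps : HasDerivWithinAt p v (Set.Icc (0:ℝ) 1) s := by
        have h1 : HasDerivAt (fun s : ℝ => s • v) ((1 : ℝ) • v) s :=
          (hasDerivAt_id s).smul_const v
        have h2 : HasDerivAt p v s := by
          have h3 := h1.const_add (ubar t); rw [one_smul] at h3; exact h3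
        exact h2.hasDerivWithinAt
      have hF : HasDerivWithinAt (fun s => f x (p s)) (J x (p s) v) (Set.Icc (0:ℝ) 1) s :=
        (hJ x (p s) (hpmem s hs)).comp_hasDerivWithinAt s hps hpmem
      have hinner : HasDerivWithinAt (fun s => (inner ℝ z (f x (p s)) : ℝ))
          ((inner ℝ z (J x (p s) v) : ℝ)
            + (inner ℝ (0 : EuclideanSpace ℝ (Fin n)) (f x (p s)) : ℝ)) (Set.Icc (0:ℝ) 1) s :=
        (hasDerivWithinAt_const _ _ z).inner ℝ hF
      simp only [inner_zero_left, add_zero] at hinner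
      have hlin : HasDerivWithinAt (fun s : ℝ => c * s) c (Set.Icc (0:ℝ) 1) s := by
        simpa using ((hasDerivAt_id s).const_mul c).hasDerivWithinAt
      exact hinner.add hlin
    have hanti : AntitoneOn g (Set.Icc (0:ℝ) 1) := by
      apply antitoneOn_of_deriv_nonpos (convex_Icc 0 1)
      · exact fun s hs => (hgd s hs).continuousWithinAt
      · intro s hs
        rw [interior_Icc] at hs
        exact (((hgd s (Set.mem_Icc_of_Ioo hs)).hasDerivAt
          (Icc_mem_nhds hs.1 hs.2)).differentiableAt).differentiableWithinAt
      · intro s hs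
        rw [interior_Icc] at hs
        have hda := (hgd s (Set.mem_Icc_of_Ioo hs)).hasDerivAt (Icc_mem_nhds hs.1 hs.2)
        rw [hda.deriv]
        have hmem := hpmem s (Set.mem_Icc_of_Ioo hs)
        have heigz := heig x (p s) hmem z
        have hJz : (inner ℝ z (J x (p s) v) : ℝ)
            = -k * (inner ℝ z (J x (p s) z) : ℝ) := by
          have hvz' : u t - ubar t = (-k) • z := by rw [← hvdef]; exact hvz
          rw [hvdef, hvz', map_smul, real_inner_smul_right]
        rw [hJz, hcdef]
        nlinarith [mul_le_mul_of_nonneg_left heigz hkpos]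
    have h01 : g 1 ≤ g 0 := hanti (Set.left_mem_Icc.2 zero_le_one)
      (Set.right_mem_Icc.2 zero_le_one) zero_le_one
    have hp0 : p 0 = ubar t := by rw [hpdef]; simp
    have hp1 : p 1 = u t := by rw [hpdef]; simp [hvdef]
    rw [hgdef] at h01
    simp only [hp0, hp1, mul_one, mul_zero, add_zero] at h01
    linarith
  -- combine
  have hsplit : (inner ℝ z zd : ℝ)
      = (inner ℝ z (f (e t + xdes) (u t) - f x (u t)) : ℝ)
        + ((inner ℝ z (f x (u t)) : ℝ) - (inner ℝ z (f x (ubar t)) : ℝ))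
        + (inner ℝ z (w t) : ℝ) := by
    rw [hzddef, hxdef]
    simp only [inner_sub_right, inner_add_right]
    ring
  have hkJ : k * Jlow = klow * Jlow + L + 1 / (4 * ρ) := by
    rw [hk]; field_simp; ring
  have hcomb : L * ‖z‖ ^ 2 - k * Jlow * ‖z‖ ^ 2 + ‖z‖ ^ 2 / (4 * ρ)
      = -(klow * Jlow) * ‖z‖ ^ 2 := by
    rw [hkJ]; field_simp; ring
  rw [hsplit]
  linarith
end

section
/- Under the hypotheses of the tube lemma (the feedback u = ū − kz with k = k̲ + (1/J̲)(L + 1/(4ρ)) and z(0) = 0, disturbance bound ‖w(t)‖ ≤ w̃), the deviation satisfies ‖z(t)‖ ≤ z̃ := √ρ · w̃ / √(k̲ J̲) for all t ≥ 0; that is, the ball {z : ‖z‖ ≤ z̃} is robust invariant for the deviation dynamics. -/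
set_option maxHeartbeats 1000000

open Set Real

theorem stmt_10 {n : ℕ}
    (f : EuclideanSpace ℝ (Fin n) → EuclideanSpace ℝ (Fin n) → EuclideanSpace ℝ (Fin n))
    (U : Set (EuclideanSpace ℝ (Fin n))) (hU : Convex ℝ U)
    (L Jlow ρ klow wmax : ℝ) (hL : 0 < L) (hJlow : 0 < Jlow) (hρ : 0 < ρ)
    (hklow : 0 < klow) (hwmax : 0 ≤ wmax)
    -- f is L-Lipschitz in its first argument, uniformly in the second
    (hLip : ∀ x x' u : EuclideanSpace ℝ (Fin n), ‖f x u - f x' u‖ ≤ L * ‖x - x'‖)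
    -- input Jacobian on U, with symmetric part having eigenvalues ≥ Jlow
    (J : EuclideanSpace ℝ (Fin n) → EuclideanSpace ℝ (Fin n) →
      (EuclideanSpace ℝ (Fin n) →L[ℝ] EuclideanSpace ℝ (Fin n)))
    (hJ : ∀ x : EuclideanSpace ℝ (Fin n), ∀ u ∈ U, HasFDerivWithinAt (f x) (J x u) U u)
    (heig : ∀ x : EuclideanSpace ℝ (Fin n), ∀ u ∈ U, ∀ v : EuclideanSpace ℝ (Fin n),
      Jlow * ‖v‖ ^ 2 ≤ (inner ℝ v (J x u v) : ℝ))
    (xdes : EuclideanSpace ℝ (Fin n))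
    (e ebar : ℝ → EuclideanSpace ℝ (Fin n))
    (u ubar w : ℝ → EuclideanSpace ℝ (Fin n))
    (k : ℝ) (hk : k = klow + (1 / Jlow) * (L + 1 / (4 * ρ)))
    (hwb : ∀ t : ℝ, ‖w t‖ ≤ wmax)
    (huU : ∀ t : ℝ, u t ∈ U) (hubarU : ∀ t : ℝ, ubar t ∈ U)
    (hfb : ∀ t : ℝ, u t = ubar t - k • (e t - ebar t))
    (he : ∀ t : ℝ, HasDerivAt e (f (e t + xdes) (u t) + w t) t)
    (hebar : ∀ t : ℝ, HasDerivAt ebar (f (ebar t + xdes) (ubar t)) t)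
    (h0 : e 0 = ebar 0) :
    ∀ t ≥ (0 : ℝ), ‖e t - ebar t‖ ≤ Real.sqrt ρ * wmax / Real.sqrt (klow * Jlow) := by
  intro T hT
  set c : ℝ := klow * Jlow with hc
  have hcpos : 0 < c := mul_pos hklow hJlow
  have hkpos : 0 < k := by
    rw [hk]; positivity
  set z : ℝ → EuclideanSpace ℝ (Fin n) := fun t => e t - ebar t with hzdef
  set z' : ℝ → EuclideanSpace ℝ (Fin n) :=
    fun t => (f (e t + xdes) (u t) + w t) - f (ebar t + xdes) (ubar t) with hz'def
  have hz : ∀ t, HasDerivAt z (z' t) t := fun t => (he t).sub (hebar t)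
  have hz0 : z 0 = 0 := sub_eq_zero.mpr h0
  -- the key pointwise differential inequality
  have key : ∀ t : ℝ, (inner ℝ (z t) (z' t) : ℝ) ≤ -c * ‖z t‖ ^ 2 + ρ * wmax ^ 2 := by
    intro t
    set x : EuclideanSpace ℝ (Fin n) := ebar t + xdes with hxdef
    set v : EuclideanSpace ℝ (Fin n) := u t - ubar t with hvdef
    have hv : v = -(k • z t) := by
      rw [hvdef, hfb t]
      show ubar t - k • (e t - ebar t) - ubar t = -(k • (e t - ebar t))
      abel
    -- Term 1 : Lipschitz bound
    have h1 : (inner ℝ (z t) (f (e t + xdes) (u t) - f x (u t)) : ℝ) ≤ L * ‖z t‖ ^ 2 := by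
      have hCS := real_inner_le_norm (z t) (f (e t + xdes) (u t) - f x (u t))
      have hlip := hLip (e t + xdes) x (u t)
      have hdiff : e t + xdes - x = z t := by rw [hxdef, hzdef]; abel
      rw [hdiff] at hlip
      have hnn := norm_nonneg (z t)
      nlinarith
    -- Term 2 : mean-value bound using the input Jacobian
    have h2 : (inner ℝ (z t) (f x (u t) - f x (ubar t)) : ℝ) ≤ -(k * Jlow) * ‖z t‖ ^ 2 := by
      set γ : ℝ → EuclideanSpace ℝ (Fin n) := fun s => ubar t + s • v with hγdef
      have hmem : ∀ s ∈ Icc (0 : ℝ) 1, γ s ∈ U := fun s hs =>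
        hU.add_smul_sub_mem (hubarU t) (huU t) hs
      set g : ℝ → ℝ := fun s => (inner ℝ (z t) (f x (γ s)) : ℝ) with hgdef
      have hg : ∀ s ∈ Icc (0 : ℝ) 1, HasDerivWithinAt g
          ((inner ℝ (z t) (J x (γ s) v)) : ℝ) (Icc 0 1) s := by
        intro s hs
        have hγs : HasDerivWithinAt γ v (Icc (0 : ℝ) 1) s := by
          have h' := (((hasDerivAt_id s).smul_const v).const_add
            (ubar t)).hasDerivWithinAt (s := Icc (0:ℝ) 1)
          simpa [hγdef] using h'
        have hcomp : HasDerivWithinAt (fun s => f x (γ s)) (J x (γ s) v) (Icc 0 1) s := by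
          have := (hJ x (γ s) (hmem s hs)).comp_hasDerivWithinAt s hγs
            (fun a ha => hmem a ha)
          exact this
        have := (hasDerivWithinAt_const s (Icc (0:ℝ) 1) (z t)).inner ℝ hcomp
        simpa [hgdef] using this
      have hcont : ContinuousOn g (Icc 0 1) := fun s hs => (hg s hs).continuousWithinAt
      have hderiv : ∀ s ∈ interior (Icc (0 : ℝ) 1),
          HasDerivAt g ((inner ℝ (z t) (J x (γ s) v)) : ℝ) s := by
        intro s hs
        rw [interior_Icc] at hs
        exact (hg s (Ioo_subset_Icc_self hs)).hasDerivAt (Icc_mem_nhds hs.1 hs.2)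
      have hdiff : DifferentiableOn ℝ g (interior (Icc (0 : ℝ) 1)) :=
        fun s hs => ((hderiv s hs).differentiableAt).differentiableWithinAt
      have hbound : ∀ s ∈ interior (Icc (0 : ℝ) 1), deriv g s ≤ -(k * Jlow) * ‖z t‖ ^ 2 := by
        intro s hs
        rw [(hderiv s hs).deriv]
        have hUmem : γ s ∈ U := by
          rw [interior_Icc] at hs
          exact hmem s (Ioo_subset_Icc_self hs)
        have heq : (inner ℝ (z t) (J x (γ s) v) : ℝ)
            = -(k * (inner ℝ (z t) (J x (γ s) (z t)) : ℝ)) := by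
          rw [hv, map_neg, map_smul, inner_neg_right, real_inner_smul_right]
        rw [heq]
        have := heig x (γ s) hUmem (z t)
        nlinarith
      have hmvt := (convex_Icc (0 : ℝ) 1).image_sub_le_mul_sub_of_deriv_le hcont hdiff
        hbound 0 (by norm_num) 1 (by norm_num) (by norm_num)
      have hg1 : g 1 = (inner ℝ (z t) (f x (u t)) : ℝ) := by
        have : γ 1 = u t := by rw [hγdef]; simp [hvdef]
        rw [hgdef]; simp only; rw [this]
      have hg0 : g 0 = (inner ℝ (z t) (f x (ubar t)) : ℝ) := by
        have : γ 0 = ubar t := by rw [hγdef]; simp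
        rw [hgdef]; simp only; rw [this]
      have : (inner ℝ (z t) (f x (u t)) : ℝ) - (inner ℝ (z t) (f x (ubar t)) : ℝ)
          ≤ -(k * Jlow) * ‖z t‖ ^ 2 := by
        rw [← hg1, ← hg0]; linarith
      rw [inner_sub_right]; exact this
    -- Term 3 : disturbance (Young's inequality)
    have h3 : (inner ℝ (z t) (w t) : ℝ) ≤ 1 / (4 * ρ) * ‖z t‖ ^ 2 + ρ * wmax ^ 2 := by
      have hCS := real_inner_le_norm (z t) (w t)
      have hw := hwb t
      have hnn := norm_nonneg (z t)
      have hsq := sq_nonneg (‖z t‖ - 2 * ρ * wmax)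
      have h4 : ‖z t‖ * wmax ≤ 1 / (4 * ρ) * ‖z t‖ ^ 2 + ρ * wmax ^ 2 := by
        rw [div_mul_eq_mul_div, one_mul, ← sub_nonneg]
        have : 1 / (4 * ρ) * ‖z t‖ ^ 2 + ρ * wmax ^ 2 - ‖z t‖ * wmax
            = (‖z t‖ - 2 * ρ * wmax) ^ 2 / (4 * ρ) := by
          field_simp; ring
        rw [div_mul_eq_mul_div, one_mul] at this
        rw [this]
        positivity
      nlinarith
    -- combine
    have hsplit : z' t = (f (e t + xdes) (u t) - f x (u t))
        + (f x (u t) - f x (ubar t)) + w t := by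
      rw [hz'def, hxdef]; abel
    have hkJ : k * Jlow * ‖z t‖ ^ 2
        = c * ‖z t‖ ^ 2 + L * ‖z t‖ ^ 2 + 1 / (4 * ρ) * ‖z t‖ ^ 2 := by
      have : k * Jlow = c + L + 1 / (4 * ρ) := by
        rw [hk, hc]; field_simp; ring
      rw [this]; ring
    rw [hsplit, inner_add_right, inner_add_right]
    linarith
  -- Grönwall's inequality for φ = ⟪z, z⟫
  set φ : ℝ → ℝ := fun t => (inner ℝ (z t) (z t) : ℝ) with hφdef
  have hφ' : ∀ t, HasDerivAt φ (2 * (inner ℝ (z t) (z' t) : ℝ)) t := by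
    intro t
    have := (hz t).inner ℝ (hz t)
    have h2 : (inner ℝ (z t) (z' t) : ℝ) + (inner ℝ (z' t) (z t) : ℝ)
        = 2 * (inner ℝ (z t) (z' t) : ℝ) := by
      rw [real_inner_comm (z' t) (z t)]; ring
    rw [h2] at this
    exact this
  have hφnorm : ∀ t, φ t = ‖z t‖ ^ 2 := fun t => real_inner_self_eq_norm_sq (z t)
  have hG := le_gronwallBound_of_liminf_deriv_right_le
    (f := φ) (f' := fun t => 2 * (inner ℝ (z t) (z' t) : ℝ))
    (δ := 0) (K := -2 * c) (ε := 2 * ρ * wmax ^ 2) (a := 0) (b := T)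
    (fun s _ => (hφ' s).continuousAt.continuousWithinAt)
    (fun s _ r hr => ((hφ' s).hasDerivWithinAt.liminf_right_slope_le hr))
    (by simp [hφdef, hz0])
    (by
      intro s _
      have hkey := key s
      have hn := hφnorm s
      show 2 * (inner ℝ (z s) (z' s) : ℝ) ≤ -2 * c * φ s + 2 * ρ * wmax ^ 2
      rw [hn]
      nlinarith)
  have hφT : φ T ≤ gronwallBound 0 (-2 * c) (2 * ρ * wmax ^ 2) (T - 0) :=
    hG T (right_mem_Icc.mpr hT)
  have hKne : (-2 * c) ≠ 0 := by
    have : (0:ℝ) < 2 * c := by linarith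
    intro h; nlinarith
  have hgb : gronwallBound 0 (-2 * c) (2 * ρ * wmax ^ 2) (T - 0) ≤ ρ * wmax ^ 2 / c := by
    rw [gronwallBound_of_K_ne_0 hKne]
    simp only [zero_mul, zero_add]
    set E := Real.exp (-2 * c * (T - 0)) with hEdef
    have hE1 : E ≤ 1 := by
      rw [hEdef]
      apply Real.exp_le_one_iff.mpr
      nlinarith
    have hE0 : 0 < E := Real.exp_pos _
    have heq : 2 * ρ * wmax ^ 2 / (-2 * c) * (E - 1)
        = ρ * wmax ^ 2 / c * (1 - E) := by
      field_simp; ring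
    rw [heq]
    have hnn : 0 ≤ ρ * wmax ^ 2 / c := by positivity
    nlinarith
  have hfinal : ‖z T‖ ^ 2 ≤ ρ * wmax ^ 2 / c := by
    rw [← hφnorm T]; linarith
  have hB2 : (Real.sqrt ρ * wmax / Real.sqrt c) ^ 2 = ρ * wmax ^ 2 / c := by
    rw [div_pow, mul_pow, Real.sq_sqrt hρ.le, Real.sq_sqrt hcpos.le]
  have hBnn : 0 ≤ Real.sqrt ρ * wmax / Real.sqrt c := by positivity
  have h5 : ‖z T‖ ≤ Real.sqrt ρ * wmax / Real.sqrt c := by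
    have hle : ‖z T‖ ^ 2 ≤ (Real.sqrt ρ * wmax / Real.sqrt c) ^ 2 := by
      rw [hB2]; exact hfinal
    have := Real.sqrt_le_sqrt hle
    rwa [Real.sqrt_sq (norm_nonneg _), Real.sqrt_sq hBnn] at this
  have hzT : e T - ebar T = z T := by rw [hzdef]
  rw [hzT]
  exact h5
end
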